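/- Let λ be a real number with 0 < λ < 1. Set R_∞ := √(1+10λ+λ²)/(1+λ), g := √(λ(1+λ))/(1+10λ+λ²)^{3/4}, S_∞ := (R_∞ − 1)/(2gR_∞), and for each integer k ≥ 0 define R_k := R_∞·((1−λ^k)(1−λ^{k+2}))/(1−λ^{k+1})² and S_k := S_∞ − gR_∞²·λ^k·((1−λ)(1−λ²))/((1−λ^{k+1})(1−λ^{k+2})). Then R_0 = 0, and for every k ≥ 0, S_k = g·(S_k² + R_k + R_{k+1}). -/

import Mathlib

private lemma slice_aux (g S T U s y C : ℝ) (hg : g ≠ 0) (hs : s ≠ 0)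
    (h1 : g * S = 1 / 2 - y / s) (h2 : g ^ 2 * (T + U) = C / s ^ 2)
    (h4 : y ^ 2 + C = s ^ 2 / 4) :
    S = g * (S ^ 2 + T + U) := by
  apply mul_left_cancel₀ hg
  have e : g * (g * (S ^ 2 + T + U)) = (g * S) ^ 2 + g ^ 2 * (T + U) := by ring
  rw [e, h1, h2]
  field_simp
  linear_combination (-4) * h4

/-- The explicit closed-form solution parametrized by `λ ∈ (0,1)` satisfies `R_0 = 0`
and the second family of classical slice equations `S_k = g(S_k² + R_k + R_{k+1})`. -/
theorem stmt17 (lam : ℝ) (hlam0 : 0 < lam) (hlam1 : lam < 1)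
    (Rinf g Sinf : ℝ)
    (hRinf : Rinf = Real.sqrt (1 + 10 * lam + lam ^ 2) / (1 + lam))
    (hg : g = Real.sqrt (lam * (1 + lam)) / (1 + 10 * lam + lam ^ 2) ^ ((3 : ℝ) / 4))
    (hSinf : Sinf = (Rinf - 1) / (2 * g * Rinf))
    (R S : ℕ → ℝ)
    (hR : ∀ k, R k = Rinf * ((1 - lam ^ k) * (1 - lam ^ (k + 2))) / (1 - lam ^ (k + 1)) ^ 2)
    (hS : ∀ k, S k = Sinf - g * Rinf ^ 2 * lam ^ k * ((1 - lam) * (1 - lam ^ 2))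
        / ((1 - lam ^ (k + 1)) * (1 - lam ^ (k + 2)))) :
    R 0 = 0 ∧ ∀ k, S k = g * ((S k) ^ 2 + R k + R (k + 1)) := by
  have hD : (0:ℝ) < 1 + 10 * lam + lam ^ 2 := by nlinarith
  set s : ℝ := Real.sqrt (1 + 10 * lam + lam ^ 2) with hsdef
  have hs0 : 0 < s := Real.sqrt_pos.mpr hD
  have hs2 : s ^ 2 = 1 + 10 * lam + lam ^ 2 := Real.sq_sqrt hD.le
  have h1l : (0:ℝ) < 1 + lam := by linarith
  have h1l' : (1 + lam) ≠ 0 := h1l.ne'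
  have hRinf' : Rinf = s / (1 + lam) := hRinf
  have hRinf0 : Rinf ≠ 0 := by rw [hRinf']; positivity
  have hg0 : g ≠ 0 := by
    rw [hg]
    have hnum : 0 < Real.sqrt (lam * (1 + lam)) := Real.sqrt_pos.mpr (by positivity)
    have hden : 0 < (1 + 10 * lam + lam ^ 2) ^ ((3:ℝ)/4) := Real.rpow_pos_of_pos hD _
    positivity
  -- g^2 = lam*(1+lam)/(s^2*s)
  have hden2 : ((1 + 10 * lam + lam ^ 2) ^ ((3:ℝ)/4)) ^ 2 = s ^ 2 * s := by
    have h32 : (1 + 10 * lam + lam ^ 2 : ℝ) ^ ((3:ℝ)/2) = s ^ 2 * s := by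
      rw [show (3:ℝ)/2 = 1 + 1/2 by norm_num, Real.rpow_add hD, Real.rpow_one,
        ← Real.sqrt_eq_rpow, ← hsdef, ← hs2]
    rw [← Real.rpow_natCast ((1 + 10 * lam + lam ^ 2) ^ ((3:ℝ)/4)) 2,
      ← Real.rpow_mul hD.le, show (3:ℝ)/4 * (2:ℕ) = 3/2 by norm_num, h32]
  have hg2 : g ^ 2 = lam * (1 + lam) / (s ^ 2 * s) := by
    rw [hg, div_pow, hden2, Real.sq_sqrt (by positivity : (0:ℝ) ≤ lam * (1 + lam))]
  have hpow : ∀ m : ℕ, (1 : ℝ) - lam ^ (m + 1) ≠ 0 := fun m => by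
    have : lam ^ (m + 1) < 1 := pow_lt_one₀ hlam0.le hlam1 (Nat.succ_ne_zero m)
    linarith
  have hgSinf : g * Sinf = 1 / 2 - (1 + lam) / (2 * s) := by
    rw [hSinf, hRinf']
    field_simp
  refine ⟨by rw [hR 0]; norm_num, fun k => ?_⟩
  have hP1 := hpow k
  have hP2 : (1:ℝ) - lam ^ (k + 2) ≠ 0 := hpow (k + 1)
  have hP3 : (1:ℝ) - lam ^ (k + 3) ≠ 0 := hpow (k + 2)
  have hkk : ∀ j : ℕ, lam ^ (k + j) = lam ^ k * lam ^ j := fun j => pow_add lam k j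
  apply slice_aux g (S k) (R k) (R (k + 1)) s
    ((1 + lam) / 2 + lam ^ (k + 1) * ((1 - lam) * (1 - lam ^ 2))
      / ((1 + lam) * ((1 - lam ^ (k + 1)) * (1 - lam ^ (k + 2)))))
    (lam * ((1 - lam ^ k) * (1 - lam ^ (k + 2)) / (1 - lam ^ (k + 1)) ^ 2
      + (1 - lam ^ (k + 1)) * (1 - lam ^ (k + 3)) / (1 - lam ^ (k + 2)) ^ 2))
    hg0 hs0.ne'
  · -- h1
    rw [hS k]
    have e : g * (Sinf - g * Rinf ^ 2 * lam ^ k * ((1 - lam) * (1 - lam ^ 2))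
        / ((1 - lam ^ (k + 1)) * (1 - lam ^ (k + 2))))
        = g * Sinf - g ^ 2 * Rinf ^ 2 * lam ^ k * ((1 - lam) * (1 - lam ^ 2))
        / ((1 - lam ^ (k + 1)) * (1 - lam ^ (k + 2))) := by ring
    rw [e, hgSinf, hg2, hRinf']
    field_simp
    ring
  · -- h2
    rw [hR k, hR (k + 1), hg2, hRinf']
    have e1 : k + 1 + 1 = k + 2 := rfl
    have e2 : k + 1 + 2 = k + 3 := rfl
    rw [e1, e2]
    field_simp
  · -- h4
    rw [hs2]
    field_simp
    ring
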